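/- Let K be a field, let α, β : ℤ → K, and let z, ζ ∈ K be such that all occurring shifted powers are defined and nonzero. Then for every n ≥ 1: (z - ζ) · ∑_{j=1}^{n} (1 - α_j β_j) · [(z;α)^{j-1} (ζ|β)^{j-1}] / [(z|β)^{j} (ζ;α)^{j}] = 1 - [(z;α)^{n} (ζ|β)^{n}] / [(z|β)^{n} (ζ;α)^{n}]. -/

import Mathlib

open Finset

/-- The shifted power `(z|γ)^k = ∏_{j=1}^k (z - γ_j)` for `k ≥ 0`. -/
noncomputable def barPow {K : Type*} [Field K] (z : K) (γ : ℕ → K) (k : ℕ) : K :=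
  ∏ j ∈ range k, (z - γ (j + 1))

/-- The shifted power `(z;γ)^k = ∏_{j=1}^k (1 - z γ_j)` for `k ≥ 0`. -/
noncomputable def semiPow {K : Type*} [Field K] (z : K) (γ : ℕ → K) (k : ℕ) : K :=
  ∏ j ∈ range k, (1 - z * γ (j + 1))

/-- Telescoping identity:
`(z - ζ) ∑_{j=1}^{n} (1-α_jβ_j) (z;α)^{j-1}(ζ|β)^{j-1}/[(z|β)^j (ζ;α)^j]
  = 1 - (z;α)^n (ζ|β)^n / [(z|β)^n (ζ;α)^n]`. -/
theorem stmt_14 {K : Type*} [Field K] (α β : ℕ → K) (z ζ : K)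
    (h1 : ∀ j, z - β j ≠ 0) (h2 : ∀ j, 1 - ζ * α j ≠ 0) (n : ℕ) (hn : 1 ≤ n) :
    (z - ζ) * ∑ j ∈ range n,
        (1 - α (j + 1) * β (j + 1)) * (semiPow z α j * barPow ζ β j) /
          (barPow z β (j + 1) * semiPow ζ α (j + 1)) =
      1 - semiPow z α n * barPow ζ β n / (barPow z β n * semiPow ζ α n) := by
  clear hn
  have hbar : ∀ k, barPow z β k ≠ 0 := fun k =>
    Finset.prod_ne_zero_iff.2 fun j _ => h1 (j + 1)
  have hsemi : ∀ k, semiPow ζ α k ≠ 0 := fun k =>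
    Finset.prod_ne_zero_iff.2 fun j _ => h2 (j + 1)
  induction n with
  | zero => simp [barPow, semiPow]
  | succ n ih =>
    rw [Finset.sum_range_succ, mul_add, ih]
    have hbs : barPow z β (n + 1) = barPow z β n * (z - β (n + 1)) :=
      Finset.prod_range_succ _ _
    have hss : semiPow ζ α (n + 1) = semiPow ζ α n * (1 - ζ * α (n + 1)) :=
      Finset.prod_range_succ _ _
    have hzs : semiPow z α (n + 1) = semiPow z α n * (1 - z * α (n + 1)) :=
      Finset.prod_range_succ _ _
    have hzb : barPow ζ β (n + 1) = barPow ζ β n * (ζ - β (n + 1)) :=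
      Finset.prod_range_succ _ _
    rw [hbs, hss, hzs, hzb]
    set a := barPow z β n with ha
    set b := semiPow ζ α n with hb
    set c := semiPow z α n
    set d := barPow ζ β n
    have ha0 : a ≠ 0 := hbar n
    have hb0 : b ≠ 0 := hsemi n
    have hc1 : z - β (n + 1) ≠ 0 := h1 (n + 1)
    have hc2 : (1 : K) - ζ * α (n + 1) ≠ 0 := h2 (n + 1)
    field_simp
    ring
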